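/- Let n be a strictly positive integer, p a prime number, and ℓ a non-negative integer. If over every algebraically closed field of characteristic p every Casas–Alvero polynomial of degree n is an n-th power of a linear polynomial, then over every algebraically closed field of characteristic p every Casas–Alvero polynomial of degree n·p^ℓ is an (n·p^ℓ)-th power of a linear polynomial. -/

import Mathlib

open Polynomial MvPolynomial

/-- `f` is a Casas–Alvero polynomial of degree `n`: it is monic of degree `n` and for each
`i ∈ {1, …, n-1}` it has a nonconstant common factor with its `i`-th Hasse derivative. -/
def IsCasasAlvero {K : Type} [Field K] (n : ℕ) (f : K[X]) : Prop :=
  f.Monic ∧ f.natDegree = n ∧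
    ∀ i ∈ Finset.Ioo 0 n,
      ∃ g : K[X], 0 < g.degree ∧ g ∣ f ∧ g ∣ Polynomial.hasseDeriv i f

/-- `p` is a bad prime for `n`: `p` is prime and there are an algebraically closed field `K` of
characteristic `p` and a Casas–Alvero polynomial of degree `n` over `K` which is not an `n`-th
power of a linear polynomial. -/
def IsBadPrime (n p : ℕ) : Prop :=
  p.Prime ∧ ∃ (K : Type) (_ : Field K), IsAlgClosed K ∧ CharP K p ∧
    ∃ f : K[X], IsCasasAlvero n f ∧ ¬ ∃ b : K, f = (Polynomial.X - Polynomial.C b) ^ n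

/-- The involution `Φ_j` on `K[x_1,…,x_m]`, sending `x_i ↦ x_i - x_j` for `i ≠ j` and
`x_j ↦ -x_j`. -/
noncomputable def Phi (K : Type) [CommRing K] {m : ℕ} (j : Fin m) :
    MvPolynomial (Fin m) K →ₐ[K] MvPolynomial (Fin m) K :=
  MvPolynomial.aeval fun i =>
    if i = j then -MvPolynomial.X j else MvPolynomial.X i - MvPolynomial.X j

/-- `Φ_j` for `j ∈ {1,…,n}` acting on `K[x_1,…,x_{n-1}]`; for `j = n` (the last index of `Fin n`)
this is the identity. -/
noncomputable def PhiFull (K : Type) [CommRing K] (n : ℕ) (j : Fin n) :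
    MvPolynomial (Fin (n - 1)) K →ₐ[K] MvPolynomial (Fin (n - 1)) K :=
  if h : (j : ℕ) < n - 1 then Phi K ⟨j, h⟩ else AlgHom.id K _

/-- `G_{T,i} = Φ_{j_i}(σ_i)`, where `i` ranges over `Fin (n-1)` (representing the degree `i+1`). -/
noncomputable def G (K : Type) [CommRing K] (n : ℕ) (T : Fin (n - 1) → Fin n)
    (i : Fin (n - 1)) : MvPolynomial (Fin (n - 1)) K :=
  PhiFull K n (T i) (MvPolynomial.esymm (Fin (n - 1)) K ((i : ℕ) + 1))

/-- `d = (n² - 3n + 4)/2`. -/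
def casasD (n : ℕ) : ℕ := (n ^ 2 - 3 * n + 4) / 2

/-- `C = binom((n²-n)/2, n-2)`, the number of monomials of degree `d` in `n-1` variables. -/
def casasC (n : ℕ) : ℕ := Nat.choose ((n ^ 2 - n) / 2) (n - 2)

/-- `D = Σ_{i=1}^{n-1} binom(d-i+n-2, n-2)`, the number of rows of `M_T`. -/
def casasDD (n : ℕ) : ℕ :=
  ∑ i ∈ Finset.Icc 1 (n - 1), Nat.choose (casasD n - i + n - 2) (n - 2)

/-- The matrix `M_T` over `ℤ`, whose rows, indexed by pairs `(i, α)` with `|α| = d - i`, are the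
coefficient vectors of `x^α · G_{T,i}` with respect to the monomials of degree `d`
(a monomial of degree `e` in `n-1` variables is encoded as an element of `Sym (Fin (n-1)) e`). -/
noncomputable def casasM (n : ℕ) (T : Fin (n - 1) → Fin n) :
    Matrix ((i : Fin (n - 1)) × Sym (Fin (n - 1)) (casasD n - ((i : ℕ) + 1)))
      (Sym (Fin (n - 1)) (casasD n)) ℤ :=
  fun r c =>
    MvPolynomial.coeff (Multiset.toFinsupp (c : Multiset (Fin (n - 1))))
      (MvPolynomial.monomial (Multiset.toFinsupp (r.2 : Multiset (Fin (n - 1)))) 1 * G ℤ n T r.1)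

/-- `J_T`: the greatest common divisor of all `C × C` minors of `M_T`. -/
noncomputable def casasJ (n : ℕ) (T : Fin (n - 1) → Fin n) : ℤ :=
  Finset.gcd (Finset.univ.filter fun
      f : Sym (Fin (n - 1)) (casasD n) →
        (i : Fin (n - 1)) × Sym (Fin (n - 1)) (casasD n - ((i : ℕ) + 1)) =>
      Function.Injective f)
    fun f => ((casasM n T).submatrix f id).det

/-- The upper bound `C! · ∏_{i=1}^{n-1} binom(i+n-2, n-2)^binom(d-i+n-2, n-2)`. -/
def casasBound (n : ℕ) : ℕ :=
  (casasC n).factorial * ∏ i ∈ Finset.Icc 1 (n - 1),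
    Nat.choose (i + n - 2) (n - 2) ^ Nat.choose (casasD n - i + n - 2) (n - 2)

lemma cast_choose_lucas {K : Type} [Field K] {p : ℕ} [Fact p.Prime] [CharP K p] (n k : ℕ) :
    ((n.choose k : ℕ) : K) = (((n % p).choose (k % p) * (n / p).choose (k / p) : ℕ) : K) :=
  CharP.natCast_eq_natCast' K p Choose.choose_modEq_choose_mod_mul_choose_div_nat

lemma coeff_pow_p {K : Type} [Field K] {p : ℕ} (hp : p.Prime) [CharP K p] (g : K[X]) (k : ℕ) :
    (g ^ p).coeff k = if p ∣ k then g.coeff (k / p) ^ p else 0 := by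
  haveI : Fact p.Prime := ⟨hp⟩
  rw [← Polynomial.map_frobenius_expand p g, Polynomial.coeff_map, Polynomial.coeff_expand hp.pos]
  split_ifs with h
  · rw [frobenius_def]
  · rw [map_zero]

lemma hasseDeriv_pow_char {K : Type} [Field K] {p : ℕ} (hp : p.Prime) [CharP K p]
    (g : K[X]) (j : ℕ) :
    Polynomial.hasseDeriv (j * p) (g ^ p) = (Polynomial.hasseDeriv j g) ^ p := by
  haveI : Fact p.Prime := ⟨hp⟩
  ext u
  rw [Polynomial.hasseDeriv_coeff, coeff_pow_p hp g, coeff_pow_p hp (Polynomial.hasseDeriv j g)]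
  by_cases hu : p ∣ u
  · obtain ⟨s, rfl⟩ := hu
    have h1 : p ∣ p * s + j * p := ⟨s + j, by ring⟩
    rw [if_pos h1, if_pos (Dvd.intro s rfl)]
    have h2 : (p * s + j * p) / p = s + j := by
      rw [Nat.add_mul_div_right _ _ hp.pos, Nat.mul_div_cancel_left _ hp.pos]
    have h3 : p * s / p = s := Nat.mul_div_cancel_left _ hp.pos
    rw [h2, h3, Polynomial.hasseDeriv_coeff, mul_pow]
    congr 1
    · have hfix : (((s + j).choose j : ℕ) : K) ^ p = (((s + j).choose j : ℕ) : K) := by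
        rw [← frobenius_def, map_natCast]
      rw [hfix, cast_choose_lucas (p := p)]
      have e1 : (p * s + j * p) % p = 0 := by
        rw [Nat.add_mul_mod_self_right, Nat.mul_mod_right]
      have e2 : (j * p) % p = 0 := Nat.mul_mod_left _ _
      have e3 : (j * p) / p = j := Nat.mul_div_cancel _ hp.pos
      rw [e1, e2, e3, h2, Nat.choose_self, one_mul]
  · rw [if_neg hu, if_neg (fun hc => hu ((Nat.dvd_add_iff_left ⟨j, mul_comm j p⟩).2 hc)), mul_zero]

lemma coeff_eq_zero_of_not_dvd {K : Type} [Field K] {p : ℕ} (hp : p.Prime) [CharP K p] {f : K[X]}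
    (hN : f.natDegree % p = 0)
    (hca : ∀ i ∈ Finset.Ioo 0 f.natDegree,
      ∃ g : K[X], 0 < g.degree ∧ g ∣ f ∧ g ∣ Polynomial.hasseDeriv i f) :
    ∀ k, ¬ p ∣ k → f.coeff k = 0 := by
  haveI : Fact p.Prime := ⟨hp⟩
  classical
  suffices H : ∀ s k, k % p ≠ 0 → p - k % p ≤ s → f.coeff k = 0 by
    intro k hk
    exact H p k (fun hmod => hk (Nat.dvd_of_mod_eq_zero hmod)) (Nat.sub_le _ _)
  intro s
  induction s using Nat.strong_induction_on with
  | _ s IH =>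
  intro k hk hs
  by_contra hne
  have htp : k % p < p := Nat.mod_lt _ hp.pos
  obtain ⟨k₀, hk₀mod, hk₀ne, hk₀le, hmax⟩ :
      ∃ k₀, k₀ % p = k % p ∧ f.coeff k₀ ≠ 0 ∧ k₀ ≤ f.natDegree ∧
        ∀ k', k' % p = k % p → f.coeff k' ≠ 0 → k' ≤ k₀ := by
    refine ⟨Nat.findGreatest (fun k' => k' % p = k % p ∧ f.coeff k' ≠ 0) f.natDegree,
      ?_, ?_, Nat.findGreatest_le _, fun k' h1 h2 =>
        Nat.le_findGreatest (Polynomial.le_natDegree_of_ne_zero h2) ⟨h1, h2⟩⟩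
    · exact (Nat.findGreatest_spec (P := fun k' => k' % p = k % p ∧ f.coeff k' ≠ 0)
        (Polynomial.le_natDegree_of_ne_zero hne) ⟨rfl, hne⟩).1
    · exact (Nat.findGreatest_spec (P := fun k' => k' % p = k % p ∧ f.coeff k' ≠ 0)
        (Polynomial.le_natDegree_of_ne_zero hne) ⟨rfl, hne⟩).2
  have hHD : Polynomial.hasseDeriv k₀ f = Polynomial.C (f.coeff k₀) := by
    ext u
    rw [Polynomial.hasseDeriv_coeff, Polynomial.coeff_C]
    rcases Nat.eq_zero_or_pos u with rfl | hu
    · simp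
    · rw [if_neg hu.ne']
      have hrp : u % p < p := Nat.mod_lt _ hp.pos
      have hmod : (u + k₀) % p = (u % p + k % p) % p := by
        rw [Nat.add_mod, hk₀mod]
      rcases Nat.eq_zero_or_pos (u % p) with hr0 | hrpos
      · have hres : (u + k₀) % p = k % p := by
          rw [hmod, hr0, zero_add, Nat.mod_eq_of_lt htp]
        have hz : f.coeff (u + k₀) = 0 := by
          by_contra hcc
          have := hmax _ hres hcc
          omega
        rw [hz, mul_zero]
      · by_cases hcarry : u % p + k % p < p
        · have hres : (u + k₀) % p = u % p + k % p := by
            rw [hmod, Nat.mod_eq_of_lt hcarry]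
          have hz : f.coeff (u + k₀) = 0 :=
            IH (p - (u % p + k % p)) (by omega) (u + k₀)
              (by rw [hres]; omega) (by rw [hres])
          rw [hz, mul_zero]
        · have hres : (u + k₀) % p = u % p + k % p - p := by
            rw [hmod, Nat.mod_eq_sub_mod (le_of_not_gt hcarry), Nat.mod_eq_of_lt (by omega)]
          have hzz : (((u + k₀).choose k₀ : ℕ) : K) = 0 := by
            rw [cast_choose_lucas (p := p), hres, hk₀mod,
              Nat.choose_eq_zero_of_lt (by omega : u % p + k % p - p < k % p),
              zero_mul, Nat.cast_zero]
          rw [hzz, zero_mul]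
  have h0 : k₀ ≠ 0 := fun h => hk (by rw [← hk₀mod, h, Nat.zero_mod])
  have hnd : k₀ ≠ f.natDegree := fun h => hk (by rw [← hk₀mod, h, hN])
  have hk₀Ioo : k₀ ∈ Finset.Ioo 0 f.natDegree :=
    Finset.mem_Ioo.2 ⟨by omega, by omega⟩
  obtain ⟨g, hg0, hgf, hgH⟩ := hca k₀ hk₀Ioo
  rw [hHD] at hgH
  have hd := Polynomial.degree_le_of_dvd hgH (by
    simpa using Polynomial.C_ne_zero.2 hk₀ne)
  rw [Polynomial.degree_C hk₀ne] at hd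
  exact absurd (lt_of_lt_of_le hg0 hd) (lt_irrefl 0)

lemma CA_step (m p : ℕ) (hp : p.Prime)
    (h : ∀ (K : Type) [Field K] [IsAlgClosed K] [CharP K p],
      ∀ f : Polynomial K, IsCasasAlvero m f →
        ∃ b : K, f = (Polynomial.X - Polynomial.C b) ^ m) :
    ∀ (K : Type) [Field K] [IsAlgClosed K] [CharP K p],
      ∀ f : Polynomial K, IsCasasAlvero (m * p) f →
        ∃ b : K, f = (Polynomial.X - Polynomial.C b) ^ (m * p) := by
  intro K _ _ _ f hf
  haveI : Fact p.Prime := ⟨hp⟩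
  obtain ⟨hmon, hdeg, hca⟩ := hf
  have hca' : ∀ i ∈ Finset.Ioo 0 f.natDegree,
      ∃ g : K[X], 0 < g.degree ∧ g ∣ f ∧ g ∣ Polynomial.hasseDeriv i f := by
    rw [hdeg]; exact hca
  have hvan : ∀ k, ¬ p ∣ k → f.coeff k = 0 :=
    coeff_eq_zero_of_not_dvd hp (by rw [hdeg]; exact Nat.mul_mod_left m p) hca'
  have hder : Polynomial.derivative f = 0 := by
    ext n
    rw [Polynomial.coeff_derivative, Polynomial.coeff_zero]
    by_cases hd : p ∣ (n + 1)
    · have hc : ((n : K) + 1) = ((n + 1 : ℕ) : K) := by push_cast; ring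
      rw [hc, (CharP.cast_eq_zero_iff K p (n + 1)).2 hd, mul_zero]
    · rw [hvan (n + 1) hd, zero_mul]
  set g : K[X] := (f.contract p).map (frobeniusEquiv K p).symm with hgdef
  have hgp : g ^ p = f := by
    rw [hgdef, ← polynomial_expand_eq, Polynomial.expand_contract p hder hp.ne_zero]
  have hgdeg : g.natDegree = m := by
    have h1 : p * g.natDegree = m * p := by
      rw [← Polynomial.natDegree_pow, hgp, hdeg]
    exact Nat.eq_of_mul_eq_mul_left hp.pos (by rw [h1, mul_comm])
  have hgmon : g.Monic := by
    have h1 : g.leadingCoeff ^ p = 1 ^ p := by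
      rw [← Polynomial.leadingCoeff_pow, hgp, one_pow]; exact hmon
    exact injective_pow_p K p h1
  have hgca : IsCasasAlvero m g := by
    refine ⟨hgmon, hgdeg, ?_⟩
    intro j hj
    rw [Finset.mem_Ioo] at hj
    have hjp : j * p ∈ Finset.Ioo 0 (m * p) :=
      Finset.mem_Ioo.2 ⟨Nat.mul_pos hj.1 hp.pos, Nat.mul_lt_mul_right hp.pos |>.2 hj.2⟩
    obtain ⟨d, hd0, hdf, hdH⟩ := hca (j * p) hjp
    obtain ⟨r, hr⟩ := IsAlgClosed.exists_root d (by
      intro hc; rw [hc] at hd0; exact absurd hd0 (lt_irrefl _))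
    have hdr : d.eval r = 0 := hr
    have evdvd : ∀ q : K[X], d ∣ q → q.eval r = 0 := by
      rintro q ⟨c, rfl⟩; rw [Polynomial.eval_mul, hdr, zero_mul]
    have hgr : g.eval r = 0 := by
      have h2 : (g.eval r) ^ p = 0 := by
        rw [← Polynomial.eval_pow, hgp]; exact evdvd f hdf
      exact pow_eq_zero_iff hp.ne_zero |>.1 h2
    have hHr : (Polynomial.hasseDeriv j g).eval r = 0 := by
      have h2 : ((Polynomial.hasseDeriv j g).eval r) ^ p = 0 := by
        rw [← Polynomial.eval_pow, ← hasseDeriv_pow_char hp g j, hgp]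
        exact evdvd _ hdH
      exact pow_eq_zero_iff hp.ne_zero |>.1 h2
    exact ⟨Polynomial.X - Polynomial.C r, by
        rw [Polynomial.degree_X_sub_C]; exact zero_lt_one,
      (Polynomial.dvd_iff_isRoot).2 hgr, (Polynomial.dvd_iff_isRoot).2 hHr⟩
  obtain ⟨b, hb⟩ := h K g hgca
  exact ⟨b, by rw [← hgp, hb, ← pow_mul]⟩

/-- If `CA_{n,p}` holds then so does `CA_{n·p^ℓ, p}`. -/
theorem CA_np_pow_charP (n : ℕ) (hn : 0 < n) (p : ℕ) (hp : p.Prime) (ℓ : ℕ)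
    (h : ∀ (K : Type) [Field K] [IsAlgClosed K] [CharP K p],
      ∀ f : Polynomial K, IsCasasAlvero n f →
        ∃ b : K, f = (Polynomial.X - Polynomial.C b) ^ n) :
    ∀ (K : Type) [Field K] [IsAlgClosed K] [CharP K p],
      ∀ f : Polynomial K, IsCasasAlvero (n * p ^ ℓ) f →
        ∃ b : K, f = (Polynomial.X - Polynomial.C b) ^ (n * p ^ ℓ) := by
  
  induction ℓ with
  | zero =>
    intro K _ _ _ f hf
    rw [pow_zero, mul_one] at hf ⊢
    exact h K f hf
  | succ ℓ IH =>
    intro K _ _ _ f hf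
    rw [pow_succ, ← mul_assoc] at hf ⊢
    exact CA_step (n * p ^ ℓ) p hp IH K f hf
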